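/- Under the nonlinear outcome model Y = f(X; β̇) + g(U) + ε_y with X = ΛU + ε_x, where ε_x is independent of U, ε_y is independent of (X, U) with mean zero, and B satisfies BᵀΛ = 0 (columns spanning col(Λ)^⊥), the GMM moment condition holds at the truth: E[BᵀX · (Y − f(X; β̇))] = E[Bᵀε_x · g(U)] + E[Bᵀε_x]·E[ε_y] = 0, provided E[ε_x] = 0 and ε_x ⟂ U. Hence G(β̇) = ‖E[SIV(Y − f(X;β̇))]‖₂² = 0. -/

import Mathlib

open Matrix MeasureTheory ProbabilityTheory

open Set
open scoped ENNReal

set_option linter.unusedSectionVars false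
set_option maxHeartbeats 1000000

section AuxIndependenceMeasurability

variable {Ω : Type*} [MeasurableSpace Ω] {μ : Measure Ω} [IsProbabilityMeasure μ]

/-- Carathéodory: if outer measures of a set and its complement sum to ≤ 1, it is
null measurable. -/
lemma nullMeasurableSet_of_add_compl_le {S : Set Ω} (h : μ S + μ Sᶜ ≤ 1) :
    NullMeasurableSet S μ := by
  set T := toMeasurable μ S with hTdef
  set T' := toMeasurable μ Sᶜ with hT'def
  have hT' : MeasurableSet T' := measurableSet_toMeasurable μ Sᶜ
  have hST : S ⊆ T := subset_toMeasurable μ S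
  have hST' : Sᶜ ⊆ T' := subset_toMeasurable μ Sᶜ
  have hU : T ∪ T' = univ := by
    apply eq_univ_of_forall
    intro x
    by_cases hx : x ∈ S
    · exact Or.inl (hST hx)
    · exact Or.inr (hST' hx)
  have hmeas : μ (T ∩ T') = 0 := by
    have h1 : μ (T ∪ T') + μ (T ∩ T') = μ T + μ T' :=
      measure_union_add_inter T hT'
    rw [hU, measure_univ, measure_toMeasurable, measure_toMeasurable] at h1
    have h2 : (1 : ℝ≥0∞) + μ (T ∩ T') ≤ 1 := h1.le.trans h
    by_contra hne
    have := ENNReal.lt_add_right (by norm_num : (1:ℝ≥0∞) ≠ ⊤) hne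
    exact absurd (this.trans_le h2) (lt_irrefl _)
  have hsub : T'ᶜ ⊆ S := fun x hx => by
    by_contra hxS
    exact hx (hST' hxS)
  have : S =ᵐ[μ] T'ᶜ := by
    refine (MeasureTheory.ae_eq_set (s := S) (t := T'ᶜ)).mpr ?_
    constructor
    · -- S \ T'ᶜ ⊆ T ∩ T'
      apply measure_mono_null (fun x hx => ?_) hmeas
      exact ⟨hST hx.1, not_not.mp hx.2⟩
    · rw [Set.diff_eq_empty.mpr hsub]; exact measure_empty
  exact (hT'.compl.nullMeasurableSet).congr this.symm


lemma exists_pos_window {F : Ω → ℝ} (hF : 0 < μ {ω | 0 < F ω}) {r : ℝ} (hr : 1 < r) :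
    ∃ a : ℝ, 0 < a ∧ 0 < μ (F ⁻¹' Ioc a (r * a)) := by
  by_contra hcon
  push_neg at hcon
  have hsub : {ω | 0 < F ω} ⊆ ⋃ n : ℤ, F ⁻¹' Ioc (r ^ n) (r ^ (n + 1)) := by
    intro ω hω
    obtain ⟨n, hn⟩ := exists_mem_Ioc_zpow hω hr
    exact mem_iUnion.2 ⟨n, hn⟩
  have h0 : μ (⋃ n : ℤ, F ⁻¹' Ioc (r ^ n) (r ^ (n + 1))) = 0 := by
    apply measure_iUnion_null
    intro n
    have hpos : (0 : ℝ) < r ^ n := zpow_pos (by linarith) n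
    have heq : r ^ (n + 1) = r * r ^ n := by
      rw [zpow_add_one₀ (by linarith : r ≠ 0)]; ring
    rw [heq]
    exact le_antisymm (hcon (r ^ n) hpos) zero_le
  exact absurd (measure_mono_null hsub h0) hF.ne'


section Fund
variable {F G H : Ω → ℝ}

/-- Fundamental estimate: localizing to a positive window of `F`, the outer measures of a
ray of `G` and its complement are controlled through the measurable product. -/
lemma fund_ineq (hind : IndepFun F G μ) (hH : Measurable H)
    (hae : (fun ω => F ω * G ω) =ᵐ[μ] H) {a b c : ℝ} (ha : 0 < a) (hab : a < b) (hc : 0 < c) :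
    μ (F ⁻¹' Ioc a b) * (μ (G ⁻¹' Iic c) + μ (G ⁻¹' Ioi c))
      ≤ μ (F ⁻¹' Ioc a b) + μ (F ⁻¹' Ioc a b ∩ H ⁻¹' Ioc (a * c) (b * c)) := by
  set u := F ⁻¹' Ioc a b with hu
  set E := H ⁻¹' Iic (a * c) with hE
  have hEm : MeasurableSet E := hH measurableSet_Iic
  have h1 : μ (u ∩ G ⁻¹' Iic c) ≤ μ (u ∩ E) + μ (u ∩ H ⁻¹' Ioc (a * c) (b * c)) := by
    refine (measure_mono_ae ?_).trans (measure_union_le _ _)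
    filter_upwards [hae] with ω hω
    rintro ⟨hωu, hωv⟩
    simp only [hu, mem_preimage, mem_Ioc] at hωu
    simp only [mem_preimage, mem_Iic] at hωv
    have hHle : H ω ≤ b * c := by
      rw [← hω]
      nlinarith [hωu.1, hωu.2, hωv]
    rcases le_or_gt (H ω) (a * c) with h | h
    · exact Or.inl ⟨hωu, h⟩
    · exact Or.inr ⟨hωu, h, hHle⟩
  have h2 : μ (u ∩ G ⁻¹' Ioi c) ≤ μ (u ∩ Eᶜ) := by
    refine measure_mono_ae ?_
    filter_upwards [hae] with ω hω
    rintro ⟨hωu, hωv⟩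
    simp only [hu, mem_preimage, mem_Ioc] at hωu
    simp only [mem_preimage, mem_Ioi] at hωv
    refine ⟨hωu, ?_⟩
    simp only [hE, mem_compl_iff, mem_preimage, mem_Iic, not_le]
    rw [← hω]
    nlinarith [hωu.1, hωu.2, hωv]
  have h3 : μ (u ∩ E) + μ (u ∩ Eᶜ) = μ u := by
    rw [← Set.diff_eq, measure_inter_add_diff u hEm]
  have hi1 : μ (u ∩ G ⁻¹' Iic c) = μ u * μ (G ⁻¹' Iic c) :=
    hind.measure_inter_preimage_eq_mul _ _ measurableSet_Ioc measurableSet_Iic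
  have hi2 : μ (u ∩ G ⁻¹' Ioi c) = μ u * μ (G ⁻¹' Ioi c) :=
    hind.measure_inter_preimage_eq_mul _ _ measurableSet_Ioc measurableSet_Ioi
  calc μ u * (μ (G ⁻¹' Iic c) + μ (G ⁻¹' Ioi c))
      = μ (u ∩ G ⁻¹' Iic c) + μ (u ∩ G ⁻¹' Ioi c) := by rw [hi1, hi2, mul_add]
    _ ≤ (μ (u ∩ E) + μ (u ∩ H ⁻¹' Ioc (a * c) (b * c))) + μ (u ∩ Eᶜ) :=
        add_le_add h1 h2
    _ = μ u + μ (u ∩ H ⁻¹' Ioc (a * c) (b * c)) := by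
        rw [add_right_comm, h3]
end Fund

section Cors
variable {F G H : Ω → ℝ}

/-- Window version: ray sums of `G` are bounded using `G`'s own small multiplicative windows. -/
lemma ray_bound_window (hind : IndepFun F G μ) (hH : Measurable H)
    (hae : (fun ω => F ω * G ω) =ᵐ[μ] H) {a b c : ℝ} (ha : 0 < a) (hab : a < b) (hc : 0 < c)
    (hu : 0 < μ (F ⁻¹' Ioc a b)) :
    μ (G ⁻¹' Iic c) + μ (G ⁻¹' Ioi c) ≤ 1 + μ (G ⁻¹' Ioc (a * c / b) (b * c / a)) := by
  set u := F ⁻¹' Ioc a b with hudef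
  have hb : 0 < b := ha.trans hab
  have key : μ (u ∩ H ⁻¹' Ioc (a * c) (b * c)) ≤ μ u * μ (G ⁻¹' Ioc (a * c / b) (b * c / a)) := by
    rw [← hind.measure_inter_preimage_eq_mul _ _ measurableSet_Ioc measurableSet_Ioc]
    refine measure_mono_ae ?_
    filter_upwards [hae] with ω hω
    rintro ⟨hωu, hωH⟩
    simp only [hudef, mem_preimage, mem_Ioc] at hωu hωH ⊢
    refine ⟨hωu, ?_, ?_⟩
    · rw [div_lt_iff₀ hb]
      rw [← hω] at hωH
      have hGpos : 0 < G ω := by nlinarith [hωu.1, hωu.2, hωH.1, mul_pos ha hc]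
      nlinarith [hωu.1, hωu.2, hωH.1]
    · rw [le_div_iff₀ ha]
      rw [← hω] at hωH
      have hGpos : 0 < G ω := by nlinarith [hωu.1, hωu.2, hωH.1, mul_pos ha hc]
      nlinarith [hωu.1, hωu.2, hωH.2]
  have h := (fund_ineq hind hH hae ha hab hc).trans
    (add_le_add_right key (μ u))
  have h2 : μ u + μ u * μ (G ⁻¹' Ioc (a * c / b) (b * c / a))
      = μ u * (1 + μ (G ⁻¹' Ioc (a * c / b) (b * c / a))) := by ring
  rw [h2] at h
  exact (ENNReal.mul_le_mul_iff_right hu.ne' (measure_ne_top μ u)).mp h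

/-- Division version: ray sums of `G` bounded by relative mass of the product in a window. -/
lemma ray_bound_div (hind : IndepFun F G μ) (hH : Measurable H)
    (hae : (fun ω => F ω * G ω) =ᵐ[μ] H) {a b c : ℝ} (ha : 0 < a) (hab : a < b) (hc : 0 < c)
    (hu : 0 < μ (F ⁻¹' Ioc a b)) :
    μ (G ⁻¹' Iic c) + μ (G ⁻¹' Ioi c)
      ≤ 1 + μ (H ⁻¹' Ioc (a * c) (b * c)) / μ (F ⁻¹' Ioc a b) := by
  set u := F ⁻¹' Ioc a b with hudef
  have h := fund_ineq hind hH hae ha hab hc (μ := μ)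
  have h2 : μ u + μ (u ∩ H ⁻¹' Ioc (a * c) (b * c))
      ≤ μ u * (1 + μ (H ⁻¹' Ioc (a * c) (b * c)) / μ u) := by
    rw [mul_add, mul_one]
    refine add_le_add_right ?_ (μ u)
    rw [ENNReal.mul_div_cancel hu.ne' (measure_ne_top μ u)]
    exact measure_mono inter_subset_right
  exact (ENNReal.mul_le_mul_iff_right hu.ne' (measure_ne_top μ u)).mp (h.trans h2)

/-- At the cut point `c = 0` we get the exact bound. -/
lemma ray_bound_zero (hind : IndepFun F G μ) (hH : Measurable H)
    (hae : (fun ω => F ω * G ω) =ᵐ[μ] H) (hpos : 0 < μ (F ⁻¹' Ioi 0)) :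
    μ (G ⁻¹' Iic 0) + μ (G ⁻¹' Ioi 0) ≤ 1 := by
  set u := F ⁻¹' Ioi 0 with hudef
  set E := H ⁻¹' Iic 0 with hEdef
  have hEm : MeasurableSet E := hH measurableSet_Iic
  have h1 : μ (u ∩ G ⁻¹' Iic 0) ≤ μ (u ∩ E) := by
    refine measure_mono_ae ?_
    filter_upwards [hae] with ω hω
    rintro ⟨hωu, hωv⟩
    simp only [hudef, mem_preimage, mem_Ioi] at hωu
    simp only [mem_preimage, mem_Iic] at hωv
    refine ⟨hωu, ?_⟩
    simp only [hEdef, mem_preimage, mem_Iic]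
    rw [← hω]
    exact mul_nonpos_of_nonneg_of_nonpos hωu.le hωv
  have h2 : μ (u ∩ G ⁻¹' Ioi 0) ≤ μ (u ∩ Eᶜ) := by
    refine measure_mono_ae ?_
    filter_upwards [hae] with ω hω
    rintro ⟨hωu, hωv⟩
    simp only [hudef, mem_preimage, mem_Ioi] at hωu hωv
    refine ⟨hωu, ?_⟩
    simp only [hEdef, mem_compl_iff, mem_preimage, mem_Iic, not_le]
    rw [← hω]
    exact mul_pos hωu hωv
  have h3 : μ (u ∩ E) + μ (u ∩ Eᶜ) = μ u := by
    rw [← Set.diff_eq, measure_inter_add_diff u hEm]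
  have hi1 : μ (u ∩ G ⁻¹' Iic 0) = μ u * μ (G ⁻¹' Iic 0) :=
    hind.measure_inter_preimage_eq_mul _ _ measurableSet_Ioi measurableSet_Iic
  have hi2 : μ (u ∩ G ⁻¹' Ioi 0) = μ u * μ (G ⁻¹' Ioi 0) :=
    hind.measure_inter_preimage_eq_mul _ _ measurableSet_Ioi measurableSet_Ioi
  have : μ u * (μ (G ⁻¹' Iic 0) + μ (G ⁻¹' Ioi 0)) ≤ μ u * 1 := by
    rw [mul_add, ← hi1, ← hi2, mul_one, ← h3]
    exact add_le_add h1 h2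
  exact (ENNReal.mul_le_mul_iff_right hpos.ne' (measure_ne_top μ u)).mp this

/-- ENNReal helper. -/
lemma le_one_of_forall_le_add {x : ℝ≥0∞} {m : ℕ → ℝ≥0∞} (h : ∀ n, x ≤ 1 + m n)
    (h0 : ⨅ n, m n = 0) : x ≤ 1 := by
  refine ENNReal.le_of_forall_pos_le_add fun ε hε _ => ?_
  have : ⨅ n, m n < ε := by rw [h0]; exact_mod_cast hε
  obtain ⟨n, hn⟩ := iInf_lt_iff.mp this
  exact (h n).trans (add_le_add_right hn.le 1)
end Cors


lemma nullMeasurable_of_rays {G : Ω → ℝ}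
    (h : ∀ c : ℝ, NullMeasurableSet (G ⁻¹' Iic c) μ) : NullMeasurable G μ := by
  have : @Measurable (NullMeasurableSpace Ω μ) ℝ _ _ G := measurable_of_Iic h
  exact this

lemma nullMeasurableSet_Iic_of_dense {G : Ω → ℝ} {B : Set ℝ} (hB : B.Countable)
    (h : ∀ c : ℝ, 0 < c → c ∉ B → NullMeasurableSet (G ⁻¹' Iic c) μ)
    (h0 : ∀ c : ℝ, c ≤ 0 → NullMeasurableSet (G ⁻¹' Iic c) μ) (c : ℝ) :
    NullMeasurableSet (G ⁻¹' Iic c) μ := by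
  rcases le_or_gt c 0 with hc | hc
  · exact h0 c hc
  have hex : ∀ n : ℕ, ∃ x : ℝ, (x ∈ Ioo c (c + 1 / (n + 1)) ∧ x ∉ B) := by
    intro n
    by_contra hcon
    push_neg at hcon
    have hsub : Ioo c (c + 1 / (n + 1)) ⊆ B := fun x hx => hcon x hx
    have h1 : (volume : Measure ℝ) (Ioo c (c + 1 / (n + 1))) = 0 :=
      measure_mono_null hsub (hB.measure_zero volume)
    rw [Real.volume_Ioo] at h1
    have h2 : c + 1 / (n + 1) - c > 0 := by
      have : (0:ℝ) < 1 / (n + 1) := by positivity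
      linarith
    rw [ENNReal.ofReal_eq_zero] at h1
    linarith
  choose cs hcs hcsB using hex
  have heq : G ⁻¹' Iic c = ⋂ n, G ⁻¹' Iic (cs n) := by
    ext ω
    simp only [mem_iInter, mem_preimage, mem_Iic]
    constructor
    · exact fun hg n => hg.trans (hcs n).1.le
    · intro hg
      by_contra hlt
      push_neg at hlt
      obtain ⟨n, hn⟩ := exists_nat_one_div_lt (show (0:ℝ) < G ω - c by linarith)
      have := (hg n).trans_lt (hcs n).2
      have : G ω < c + 1 / (n + 1) := this
      linarith
  rw [heq]
  exact NullMeasurableSet.iInter fun n => h (cs n) (hc.trans (hcs n).1) (hcsB n)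


/-- The shrinking multiplicative windows around `x > 0`. -/
def mwin (x : ℝ) (n : ℕ) : Set ℝ := Ioc (x - x / (2 * (n + 1))) (x + x / (2 * (n + 1)))

lemma mwin_antitone {x : ℝ} (hx : 0 < x) : Antitone fun n => mwin x n := by
  intro n m hnm
  have h1 : (0:ℝ) < 2 * (n + 1) := by positivity
  have h2 : (0:ℝ) < 2 * (m + 1) := by positivity
  have hle : x / (2 * (m + 1)) ≤ x / (2 * (n + 1)) := by
    apply div_le_div_of_nonneg_left hx.le h1
    have : (n:ℝ) ≤ m := by exact_mod_cast hnm
    linarith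
  exact Ioc_subset_Ioc (by linarith) (by linarith)

lemma mwin_left_pos {x : ℝ} (hx : 0 < x) (n : ℕ) : 0 < x - x / (2 * (n + 1)) := by
  have h1 : (1:ℝ) ≤ 2 * (n + 1) := by
    have : (0:ℝ) ≤ n := Nat.cast_nonneg n
    linarith
  have : x / (2 * (n + 1)) ≤ x / 1 := by
    apply div_le_div_of_nonneg_left hx.le one_pos h1
  have hlt : x / (2 * (n + 1)) < x := by
    rw [div_lt_iff₀ (by positivity)]
    nlinarith
  linarith

lemma mwin_lt {x : ℝ} (hx : 0 < x) (n : ℕ) :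
    x - x / (2 * (n + 1)) < x + x / (2 * (n + 1)) := by
  have : (0:ℝ) < x / (2 * (n + 1)) := by positivity
  linarith

lemma iInter_mwin {x : ℝ} (hx : 0 < x) : ⋂ n, mwin x n = {x} := by
  ext y
  simp only [mem_iInter, mwin, mem_Ioc, mem_singleton_iff]
  constructor
  · intro h
    have key : ∀ n : ℕ, |y - x| ≤ x / (2 * (n + 1)) := by
      intro n
      obtain ⟨h1, h2⟩ := h n
      rw [abs_le]
      constructor <;> linarith
    by_contra hne
    have habs : 0 < |y - x| := abs_pos.mpr (sub_ne_zero.mpr hne)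
    obtain ⟨n, hn⟩ := exists_nat_one_div_lt (show (0:ℝ) < |y - x| / x by positivity)
    have h1 : x < |y - x| * (n + 1) := by
      rw [div_lt_div_iff₀ (by positivity) hx] at hn
      linarith
    have h2 := key n
    have h3 : x / (2 * ((n:ℝ) + 1)) * (2 * ((n:ℝ) + 1)) = x :=
      div_mul_cancel₀ _ (by positivity)
    nlinarith [Nat.cast_nonneg (α := ℝ) n]
  · rintro rfl
    intro n
    have : (0:ℝ) < y / (2 * (n + 1)) := by positivity
    constructor <;> linarith


lemma le_one_of_forall_le_add_div {x ε : ℝ≥0∞} (hε : 0 < ε) (hεtop : ε ≠ ⊤)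
    {m : ℕ → ℝ≥0∞} (h : ∀ n, x ≤ 1 + m n / ε) (h0 : ⨅ n, m n = 0) : x ≤ 1 := by
  refine ENNReal.le_of_forall_pos_le_add fun δ hδ _ => ?_
  have hpos : (0:ℝ≥0∞) < δ * ε := by
    apply ENNReal.mul_pos (by exact_mod_cast hδ.ne') hε.ne'
  have : ⨅ n, m n < δ * ε := by rw [h0]; exact hpos
  obtain ⟨n, hn⟩ := iInf_lt_iff.mp this
  have hdiv : m n / ε < δ := by
    rw [ENNReal.div_lt_iff (Or.inl hε.ne') (Or.inl hεtop)]
    exact hn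
  exact (h n).trans (add_le_add_right hdiv.le 1)

lemma measure_le_of_ae_imp {s t : Set Ω} (h : ∀ᵐ ω ∂μ, ω ∈ s → ω ∈ t) : μ s ≤ μ t :=
  measure_mono_ae h

/-- Key dichotomy: one of the two independent nonnegative factors of an a.e. measurable,
not a.e. zero, product is a.e. measurable. -/
lemma aemeasurable_one_of_indep_mul {F G H : Ω → ℝ} (hind : IndepFun F G μ)
    (hH : Measurable H) (hae : (fun ω => F ω * G ω) =ᵐ[μ] H)
    (hFnn : ∀ ω, 0 ≤ F ω) (hGnn : ∀ ω, 0 ≤ G ω)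
    (hne : ¬ ((fun ω => F ω * G ω) =ᵐ[μ] (fun _ => (0:ℝ)))) :
    AEMeasurable F μ ∨ AEMeasurable G μ := by
  have hHne : ¬ (H =ᵐ[μ] (fun _ => (0:ℝ))) := fun hcon => hne (hae.trans hcon)
  have hHpos : 0 < μ {ω | H ω ≠ 0} := by
    rcases eq_or_ne (μ {ω | H ω ≠ 0}) 0 with h | h
    · exact absurd (by simpa [Filter.EventuallyEq, ae_iff] using h) hHne
    · exact pos_iff_ne_zero.mpr h
  have hFpos : 0 < μ (F ⁻¹' Ioi 0) := by
    refine lt_of_lt_of_le hHpos (measure_le_of_ae_imp ?_)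
    filter_upwards [hae] with ω hω hmem
    simp only [mem_preimage, mem_Ioi]
    rcases (hFnn ω).lt_or_eq with h | h
    · exact h
    · exact absurd (by rw [← hω, ← h]; ring) hmem
  have hGpos : 0 < μ (G ⁻¹' Ioi 0) := by
    refine lt_of_lt_of_le hHpos (measure_le_of_ae_imp ?_)
    filter_upwards [hae] with ω hω hmem
    simp only [mem_preimage, mem_Ioi]
    rcases (hGnn ω).lt_or_eq with h | h
    · exact h
    · exact absurd (by rw [← hω, ← h]; ring) hmem
  by_cases hatom : ∃ a₀ : ℝ, 0 < a₀ ∧ 0 < ⨅ n : ℕ, μ (F ⁻¹' mwin a₀ n)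
  · -- `F` has an outer atom: `G` is a.e. measurable.
    right
    obtain ⟨a₀, ha₀, hε⟩ := hatom
    set ε := ⨅ n : ℕ, μ (F ⁻¹' mwin a₀ n) with hεdef
    have hεtop : ε ≠ ⊤ := by
      refine ne_top_of_le_ne_top (measure_ne_top μ (F ⁻¹' mwin a₀ 0)) ?_
      exact iInf_le _ 0
    have hBadc : Set.Countable {y : ℝ | 0 < μ (H ⁻¹' {y})} := by
      have h := Measure.countable_meas_level_set_pos hH (μ := μ)
      have heq : {y : ℝ | 0 < μ (H ⁻¹' {y})} = {t : ℝ | 0 < μ {a | H a = t}} := rfl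
      rw [heq]
      exact h
    set B : Set ℝ := (fun y => y / a₀) '' {y : ℝ | 0 < μ (H ⁻¹' {y})} with hBdef
    have hB : B.Countable := hBadc.image _
    have hray : ∀ c : ℝ, 0 < c → c ∉ B → NullMeasurableSet (G ⁻¹' Iic c) μ := by
      intro c hc hcB
      have hsum : μ (G ⁻¹' Iic c) + μ (G ⁻¹' Ioi c) ≤ 1 := by
        refine le_one_of_forall_le_add_div hε hεtop
          (m := fun n => μ (H ⁻¹' Ioc ((a₀ - a₀ / (2 * (n + 1))) * c)
            ((a₀ + a₀ / (2 * (n + 1))) * c))) (fun n => ?_) ?_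
        · have ha : 0 < a₀ - a₀ / (2 * (n + 1)) := mwin_left_pos ha₀ n
          have hab : a₀ - a₀ / (2 * (n + 1)) < a₀ + a₀ / (2 * (n + 1)) := mwin_lt ha₀ n
          have hu : 0 < μ (F ⁻¹' Ioc (a₀ - a₀ / (2 * (n + 1))) (a₀ + a₀ / (2 * (n + 1)))) :=
            lt_of_lt_of_le hε (iInf_le _ n)
          refine (ray_bound_div hind hH hae ha hab hc hu).trans ?_
          refine add_le_add_right (ENNReal.div_le_div le_rfl ?_) 1
          exact iInf_le _ n
        · have hiInter : ⋂ n : ℕ, H ⁻¹' Ioc ((a₀ - a₀ / (2 * (n + 1))) * c)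
              ((a₀ + a₀ / (2 * (n + 1))) * c) = H ⁻¹' {a₀ * c} := by
            rw [← preimage_iInter]
            have hshape : ∀ n : ℕ, Ioc ((a₀ - a₀ / (2 * (n + 1))) * c)
                ((a₀ + a₀ / (2 * (n + 1))) * c) = mwin (a₀ * c) n := by
              intro n
              unfold mwin
              congr 1 <;> field_simp <;> ring
            have harg : (⋂ n : ℕ, Ioc ((a₀ - a₀ / (2 * (n + 1))) * c)
                ((a₀ + a₀ / (2 * (n + 1))) * c)) = {a₀ * c} := by
              simp_rw [hshape]
              exact iInter_mwin (by positivity)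
            rw [harg]
          have hanti : Antitone (fun n : ℕ => H ⁻¹' Ioc ((a₀ - a₀ / (2 * (n + 1))) * c)
              ((a₀ + a₀ / (2 * (n + 1))) * c)) := by
            intro n m hnm
            apply preimage_mono
            have h1 : a₀ / (2 * ((m:ℝ) + 1)) ≤ a₀ / (2 * ((n:ℝ) + 1)) := by
              apply div_le_div_of_nonneg_left ha₀.le (by positivity)
              have : (n:ℝ) ≤ m := by exact_mod_cast hnm
              linarith
            apply Ioc_subset_Ioc <;> nlinarith
          have := hanti.measure_iInter (μ := μ)
            (fun n => (hH measurableSet_Ioc).nullMeasurableSet)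
            ⟨0, measure_ne_top μ _⟩
          rw [hiInter] at this
          rw [← this]
          by_contra hpos
          refine hcB ?_
          rw [hBdef]
          refine ⟨a₀ * c, ?_, by field_simp⟩
          simp only [mem_setOf_eq]
          exact pos_iff_ne_zero.mpr hpos
      have hcompl : (G ⁻¹' Iic c)ᶜ = G ⁻¹' Ioi c := by
        rw [← preimage_compl, compl_Iic]
      exact nullMeasurableSet_of_add_compl_le (by rw [hcompl]; exact hsum)
    have hray0 : ∀ c : ℝ, c ≤ 0 → NullMeasurableSet (G ⁻¹' Iic c) μ := by
      intro c hc
      rcases hc.lt_or_eq with hlt | rfl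
      · have : G ⁻¹' Iic c = ∅ := by
          ext ω
          simp only [mem_preimage, mem_Iic, mem_empty_iff_false, iff_false, not_le]
          exact hlt.trans_le (hGnn ω)
        rw [this]
        exact nullMeasurableSet_empty
      · have hsum := ray_bound_zero hind hH hae hFpos
        have hcompl : (G ⁻¹' Iic 0)ᶜ = G ⁻¹' Ioi 0 := by
          rw [← preimage_compl, compl_Iic]
        exact nullMeasurableSet_of_add_compl_le (by rw [hcompl]; exact hsum)
    exact (nullMeasurable_of_rays
      (nullMeasurableSet_Iic_of_dense hB hray hray0)).aemeasurable
  · -- no outer atom: `F` itself is a.e. measurable.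
    left
    push_neg at hatom
    have hno : ∀ c : ℝ, 0 < c → ⨅ n : ℕ, μ (F ⁻¹' mwin c n) = 0 := by
      intro c hc
      have := hatom c hc
      simpa using this
    have haeswap : (fun ω => G ω * F ω) =ᵐ[μ] H := by
      filter_upwards [hae] with ω hω
      rw [← hω]; ring
    have hray : ∀ c : ℝ, 0 < c → c ∉ (∅ : Set ℝ) → NullMeasurableSet (F ⁻¹' Iic c) μ := by
      intro c hc _
      have hsum : μ (F ⁻¹' Iic c) + μ (F ⁻¹' Ioi c) ≤ 1 := by
        refine le_one_of_forall_le_add (m := fun n => μ (F ⁻¹' mwin c n)) (fun n => ?_)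
          (hno c hc)
        obtain ⟨a, ha, hwin⟩ := exists_pos_window hGpos
          (show (1:ℝ) < 1 + 1 / (2 * n + 3) by
            have : (0:ℝ) < 1 / (2 * (n:ℝ) + 3) := by positivity
            linarith)
        set r : ℝ := 1 + 1 / (2 * (n:ℝ) + 3) with hrdef
        have hr1 : (1:ℝ) < r := by
          have : (0:ℝ) < 1 / (2 * (n:ℝ) + 3) := by positivity
          rw [hrdef]; linarith
        have hb : a < r * a := by nlinarith
        have := ray_bound_window hind.symm hH haeswap ha hb hc hwin
        refine this.trans (add_le_add_right (measure_mono (preimage_mono ?_)) 1)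
        -- Ioc (a*c/(r*a)) ((r*a)*c/a) ⊆ mwin c n
        have hane : a ≠ 0 := ha.ne'
        have h1 : a * c / (r * a) = c / r := by field_simp
        have h2 : r * a * c / a = r * c := by field_simp
        rw [h1, h2]
        unfold mwin
        apply Ioc_subset_Ioc
        · -- c - c/(2(n+1)) ≤ c / r
          rw [le_div_iff₀ (by linarith)]
          have hq : (0:ℝ) < 2 * ((n:ℝ) + 1) := by positivity
          have hq3 : (0:ℝ) < 2 * (n:ℝ) + 3 := by positivity
          have hc2 : c / (2 * ((n:ℝ) + 1)) * (2 * ((n:ℝ) + 1)) = c :=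
            div_mul_cancel₀ _ (by positivity)
          rw [hrdef]
          have expand : (c - c / (2 * ((n:ℝ) + 1))) * (1 + 1 / (2 * (n:ℝ) + 3))
              = c - c / (2 * ((n:ℝ) + 1)) + (c - c / (2 * ((n:ℝ) + 1))) / (2 * (n:ℝ) + 3) := by
            ring
          rw [expand]
          have hd : c / (2 * ((n:ℝ) + 1)) > 0 := by positivity
          have h5 : (c - c / (2 * ((n:ℝ) + 1))) / (2 * (n:ℝ) + 3) ≤ c / (2 * ((n:ℝ) + 1)) := by
            rw [div_le_iff₀ hq3]
            have h6 : c - c / (2 * ((n:ℝ) + 1)) ≤ c := by linarith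
            have h7 : c ≤ c / (2 * ((n:ℝ) + 1)) * (2 * (n:ℝ) + 2) := by
              rw [div_mul_eq_mul_div, le_div_iff₀ hq]
              nlinarith
            nlinarith
          linarith
        · -- r * c ≤ c + c/(2(n+1))
          rw [hrdef]
          have : (1 + 1 / (2 * (n:ℝ) + 3)) * c = c + c / (2 * (n:ℝ) + 3) := by ring
          rw [this]
          have : c / (2 * (n:ℝ) + 3) ≤ c / (2 * ((n:ℝ) + 1)) := by
            apply div_le_div_of_nonneg_left hc.le (by positivity)
            linarith
          linarith
      have hcompl : (F ⁻¹' Iic c)ᶜ = F ⁻¹' Ioi c := by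
        rw [← preimage_compl, compl_Iic]
      exact nullMeasurableSet_of_add_compl_le (by rw [hcompl]; exact hsum)
    have hray0 : ∀ c : ℝ, c ≤ 0 → NullMeasurableSet (F ⁻¹' Iic c) μ := by
      intro c hc
      rcases hc.lt_or_eq with hlt | rfl
      · have : F ⁻¹' Iic c = ∅ := by
          ext ω
          simp only [mem_preimage, mem_Iic, mem_empty_iff_false, iff_false, not_le]
          exact hlt.trans_le (hFnn ω)
        rw [this]
        exact nullMeasurableSet_empty
      · have hsum := ray_bound_zero hind.symm hH haeswap hGpos
        have hcompl : (F ⁻¹' Iic 0)ᶜ = F ⁻¹' Ioi 0 := by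
          rw [← preimage_compl, compl_Iic]
        exact nullMeasurableSet_of_add_compl_le (by rw [hcompl]; exact hsum)
    exact (nullMeasurable_of_rays
      (nullMeasurableSet_Iic_of_dense countable_empty hray hray0)).aemeasurable

/-- Once one independent factor is a.e. measurable, so is the other
(provided the product is not a.e. zero). -/
lemma aemeasurable_other_of_indep_mul {F G H : Ω → ℝ} (hind : IndepFun F G μ)
    (hH : Measurable H) (hae : (fun ω => F ω * G ω) =ᵐ[μ] H)
    (hne : ¬ ((fun ω => F ω * G ω) =ᵐ[μ] (fun _ => (0:ℝ))))
    (hG : AEMeasurable G μ) : AEMeasurable F μ := by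
  set Gm := hG.mk G with hGmdef
  have hGm : Measurable Gm := hG.measurable_mk
  have hGae : G =ᵐ[μ] Gm := hG.ae_eq_mk
  set Z : Set Ω := Gm ⁻¹' {0} with hZdef
  have hZm : MeasurableSet Z := hGm (measurableSet_singleton 0)
  have hZae : (Z : Set Ω) =ᵐ[μ] (G ⁻¹' {0}) := by
    rw [Filter.eventuallyEq_set]
    filter_upwards [hGae] with ω h
    simp only [hZdef, mem_preimage, mem_singleton_iff, h]
  have hzlt : μ Z < 1 := by
    rcases lt_or_ge (μ Z) 1 with h | h
    · exact h
    · exfalso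
      have hz1 : μ Z = 1 := le_antisymm prob_le_one h
      have hc0 : μ Zᶜ = 0 := by
        rw [measure_compl hZm (measure_ne_top μ Z), hz1, measure_univ]
        simp
      have hGz : ∀ᵐ ω ∂μ, Gm ω = 0 := by
        rw [ae_iff]
        refine measure_mono_null (fun ω h => ?_) hc0
        exact h
      refine hne ?_
      filter_upwards [hGae, hGz] with ω h1 h2
      simp [h1, h2]
  set F1 : Ω → ℝ := fun ω => H ω / Gm ω with hF1def
  have hF1m : Measurable F1 := hH.div hGm
  have hkey : ∀ᵐ ω ∂μ, Gm ω ≠ 0 → F ω = F1 ω := by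
    filter_upwards [hae, hGae] with ω h1 h2 h3
    have h4 : H ω = F ω * Gm ω := by rw [← h1, h2]
    rw [hF1def]
    field_simp [h4]
    exact h4.symm
  have hray : ∀ x : ℝ, NullMeasurableSet (F ⁻¹' Iic x) μ := by
    intro x
    apply nullMeasurableSet_of_add_compl_le
    have hcompl : (F ⁻¹' Iic x)ᶜ = F ⁻¹' Ioi x := by
      rw [← preimage_compl, compl_Iic]
    rw [hcompl]
    have hinterZ : ∀ s : Set ℝ, MeasurableSet s →
        μ (F ⁻¹' s ∩ Z) = μ (F ⁻¹' s) * μ Z := by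
      intro s hs
      have h1 : ((F ⁻¹' s ∩ Z : Set Ω)) =ᵐ[μ] ((F ⁻¹' s ∩ G ⁻¹' {0} : Set Ω)) := by
        rw [Filter.eventuallyEq_set]
        filter_upwards [hGae] with ω h
        simp only [mem_inter_iff, mem_preimage, hZdef, mem_singleton_iff, h]
      rw [measure_congr h1,
        hind.measure_inter_preimage_eq_mul _ _ hs (measurableSet_singleton 0),
        measure_congr hZae.symm]
    have hdiff : ∀ (s t : Set ℝ), MeasurableSet s → (∀ y : ℝ, y ∈ s ↔ y ∈ t) →
        μ (F ⁻¹' s \ Z) = μ (F1 ⁻¹' t ∩ Zᶜ) := by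
      intro s t hs hst
      refine measure_congr ?_
      rw [Filter.eventuallyEq_set]
      filter_upwards [hkey] with ω h
      simp only [mem_diff, mem_inter_iff, mem_compl_iff, mem_preimage, hZdef,
        mem_singleton_iff]
      constructor
      · rintro ⟨h1, h2⟩
        exact ⟨by rw [← h h2]; exact (hst _).mp h1, h2⟩
      · rintro ⟨h1, h2⟩
        exact ⟨(hst _).mpr (by rw [h h2]; exact h1), h2⟩
    have e1 : μ (F ⁻¹' Iic x) = μ (F ⁻¹' Iic x) * μ Z + μ (F1 ⁻¹' Iic x ∩ Zᶜ) := by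
      conv_lhs => rw [← measure_inter_add_diff (F ⁻¹' Iic x) hZm]
      rw [hinterZ _ measurableSet_Iic, hdiff _ _ measurableSet_Iic (fun y => Iff.rfl)]
    have e2 : μ (F ⁻¹' Ioi x) = μ (F ⁻¹' Ioi x) * μ Z + μ (F1 ⁻¹' Ioi x ∩ Zᶜ) := by
      conv_lhs => rw [← measure_inter_add_diff (F ⁻¹' Ioi x) hZm]
      rw [hinterZ _ measurableSet_Ioi, hdiff _ _ measurableSet_Ioi (fun y => Iff.rfl)]
    have hsplit : μ (F1 ⁻¹' Iic x ∩ Zᶜ) + μ (F1 ⁻¹' Ioi x ∩ Zᶜ) = μ Zᶜ := by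
      have h1 := measure_inter_add_diff (μ := μ) (Zᶜ : Set Ω)
        (hF1m (measurableSet_Iic : MeasurableSet (Iic x)))
      have h2 : (Zᶜ : Set Ω) \ (F1 ⁻¹' Iic x) = F1 ⁻¹' Ioi x ∩ Zᶜ := by
        rw [diff_eq, inter_comm]
        congr 1
        rw [← preimage_compl, compl_Iic]
      have h3 : (Zᶜ : Set Ω) ∩ (F1 ⁻¹' Iic x) = F1 ⁻¹' Iic x ∩ Zᶜ := inter_comm _ _
      rw [h2, h3] at h1
      exact h1
    -- ENNReal arithmetic
    have hZc : μ Zᶜ = 1 - μ Z := by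
      rw [measure_compl hZm (measure_ne_top μ Z), measure_univ]
    set A := μ (F ⁻¹' Iic x)
    set Bq := μ (F ⁻¹' Ioi x)
    have hS : A + Bq = (A + Bq) * μ Z + μ Zᶜ := by
      conv_lhs => rw [e1, e2]
      rw [← hsplit]
      ring
    have hAfin : A ≠ ⊤ := measure_ne_top μ _
    have hBfin : Bq ≠ ⊤ := measure_ne_top μ _
    have hSfin : A + Bq ≠ ⊤ := ENNReal.add_ne_top.mpr ⟨hAfin, hBfin⟩
    have hzfin : μ Z ≠ ⊤ := measure_ne_top μ Z
    -- pass to real numbers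
    have hs' : (A + Bq).toReal = (A + Bq).toReal * (μ Z).toReal + (1 - (μ Z).toReal) := by
      have := congrArg ENNReal.toReal hS
      rw [ENNReal.toReal_add (by exact ENNReal.mul_ne_top hSfin hzfin) (measure_ne_top μ Zᶜ),
        ENNReal.toReal_mul, hZc, ENNReal.toReal_sub_of_le hzlt.le (by simp)] at this
      simpa using this
    have hζ : (μ Z).toReal < 1 := by
      rw [← ENNReal.toReal_one]
      exact (ENNReal.toReal_lt_toReal hzfin (by simp)).mpr hzlt
    have hfactor : ((A + Bq).toReal - 1) * (1 - (μ Z).toReal) = 0 := by nlinarith [hs']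
    have hone : (A + Bq).toReal = 1 := by
      rcases mul_eq_zero.mp hfactor with h | h
      · linarith
      · linarith
    have : (A + Bq).toReal ≤ (1 : ℝ≥0∞).toReal := by simp [hone]
    exact (ENNReal.toReal_le_toReal hSfin (by simp)).mp this
  exact (nullMeasurable_of_rays hray).aemeasurable

/-- The positivity set of an independent factor of an a.e. measurable, not a.e. zero,
product is null measurable. -/
lemma nullMeasurableSet_pos_of_indep_mul {F G H : Ω → ℝ} (hind : IndepFun F G μ)
    (hH : Measurable H) (hae : (fun ω => F ω * G ω) =ᵐ[μ] H)
    (hne : ¬ ((fun ω => F ω * G ω) =ᵐ[μ] (fun _ => (0:ℝ)))) :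
    NullMeasurableSet (F ⁻¹' Ioi 0) μ := by
  have hHne : ¬ (H =ᵐ[μ] (fun _ => (0:ℝ))) := fun hcon => hne (hae.trans hcon)
  have hHpos : 0 < μ {ω | H ω ≠ 0} := by
    rcases eq_or_ne (μ {ω | H ω ≠ 0}) 0 with h | h
    · exact absurd (by simpa [Filter.EventuallyEq, ae_iff] using h) hHne
    · exact pos_iff_ne_zero.mpr h
  have hGhalf : 0 < μ (G ⁻¹' Ioi 0) ∨ 0 < μ (G ⁻¹' Iio 0) := by
    by_contra hcon
    push_neg at hcon
    obtain ⟨h1, h2⟩ := hcon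
    have h1' : μ (G ⁻¹' Ioi 0) = 0 := le_antisymm h1 zero_le
    have h2' : μ (G ⁻¹' Iio 0) = 0 := le_antisymm h2 zero_le
    have hsub : {ω | H ω ≠ 0} ≤ᵐ[μ] ((G ⁻¹' Ioi 0) ∪ (G ⁻¹' Iio 0) : Set Ω) := by
      filter_upwards [hae] with ω hω hmem
      rcases lt_trichotomy (G ω) 0 with h | h | h
      · exact Or.inr h
      · exact absurd (by rw [← hω, h, mul_zero]) hmem
      · exact Or.inl h
    have hle := (measure_mono_ae hsub).trans (measure_union_le _ _)
    rw [h1', h2', add_zero] at hle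
    exact absurd (le_antisymm hle zero_le) hHpos.ne'
  have key : ∀ (v s₁ s₂ s₀ : Set ℝ), MeasurableSet v → MeasurableSet s₁ →
      MeasurableSet s₂ → MeasurableSet s₀ → 0 < μ (G ⁻¹' v) →
      (∀ᵐ ω ∂μ, G ω ∈ v →
        (((0:ℝ) < H ω ↔ F ω ∈ s₁) ∧ (H ω < 0 ↔ F ω ∈ s₂) ∧ (H ω = 0 ↔ F ω ∈ s₀))) →
      μ (F ⁻¹' s₁) + μ (F ⁻¹' s₂) + μ (F ⁻¹' s₀) = 1 := by
    intro v s₁ s₂ s₀ hv hs₁ hs₂ hs₀ hvpos hiff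
    set W := G ⁻¹' v with hWdef
    have hW1 : MeasurableSet (H ⁻¹' Ioi 0) := hH measurableSet_Ioi
    have hW2 : MeasurableSet (H ⁻¹' Iio 0) := hH measurableSet_Iio
    have hdecomp : μ W = μ (W ∩ H ⁻¹' Ioi 0) + μ (W ∩ H ⁻¹' Iio 0)
        + μ (W ∩ H ⁻¹' {0}) := by
      have d1 : μ W = μ (W ∩ H ⁻¹' Ioi 0) + μ (W \ H ⁻¹' Ioi 0) :=
        (measure_inter_add_diff W hW1).symm
      have d2 : μ (W \ H ⁻¹' Ioi 0) = μ ((W \ H ⁻¹' Ioi 0) ∩ H ⁻¹' Iio 0)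
          + μ ((W \ H ⁻¹' Ioi 0) \ H ⁻¹' Iio 0) :=
        (measure_inter_add_diff _ hW2).symm
      have e1 : (W \ H ⁻¹' Ioi 0) ∩ H ⁻¹' Iio 0 = W ∩ H ⁻¹' Iio 0 := by
        ext ω
        simp only [mem_diff, mem_inter_iff, mem_preimage, mem_Ioi, mem_Iio]
        constructor
        · rintro ⟨⟨h1, _⟩, h2⟩
          exact ⟨h1, h2⟩
        · rintro ⟨h1, h2⟩
          exact ⟨⟨h1, by linarith⟩, h2⟩
      have e2 : (W \ H ⁻¹' Ioi 0) \ H ⁻¹' Iio 0 = W ∩ H ⁻¹' {0} := by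
        ext ω
        simp only [mem_diff, mem_inter_iff, mem_preimage, mem_Ioi, mem_Iio,
          mem_singleton_iff, not_lt]
        constructor
        · rintro ⟨⟨h1, h2⟩, h3⟩
          exact ⟨h1, le_antisymm h2 h3⟩
        · rintro ⟨h1, h2⟩
          exact ⟨⟨h1, by linarith⟩, by linarith⟩
      rw [d1, d2, e1, e2]
      ring
    have hcong : ∀ (e : Set ℝ) (s : Set ℝ), MeasurableSet s →
        (∀ᵐ ω ∂μ, G ω ∈ v → (H ω ∈ e ↔ F ω ∈ s)) →
        μ (W ∩ H ⁻¹' e) = μ W * μ (F ⁻¹' s) := by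
      intro e s hs hiff'
      have hce : ((W ∩ H ⁻¹' e : Set Ω)) =ᵐ[μ] ((F ⁻¹' s ∩ W : Set Ω)) := by
        rw [Filter.eventuallyEq_set]
        filter_upwards [hiff'] with ω h
        simp only [mem_inter_iff, mem_preimage]
        constructor
        · rintro ⟨h1, h2⟩
          exact ⟨(h h1).mp h2, h1⟩
        · rintro ⟨h1, h2⟩
          exact ⟨h2, (h h2).mpr h1⟩
      rw [measure_congr hce, hind.measure_inter_preimage_eq_mul _ _ hs hv, mul_comm]
    have c1 : μ (W ∩ H ⁻¹' Ioi 0) = μ W * μ (F ⁻¹' s₁) :=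
      hcong (Ioi 0) s₁ hs₁ (by filter_upwards [hiff] with ω h hv'; exact (h hv').1)
    have c2 : μ (W ∩ H ⁻¹' Iio 0) = μ W * μ (F ⁻¹' s₂) :=
      hcong (Iio 0) s₂ hs₂ (by filter_upwards [hiff] with ω h hv'; exact (h hv').2.1)
    have c0 : μ (W ∩ H ⁻¹' {0}) = μ W * μ (F ⁻¹' s₀) :=
      hcong {0} s₀ hs₀ (by filter_upwards [hiff] with ω h hv'; exact (h hv').2.2)
    have hfin : μ W * 1 = μ W * (μ (F ⁻¹' s₁) + μ (F ⁻¹' s₂) + μ (F ⁻¹' s₀)) := by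
      rw [mul_one]
      conv_lhs => rw [hdecomp, c1, c2, c0]
      ring
    have h1 : (1:ℝ≥0∞) ≤ μ (F ⁻¹' s₁) + μ (F ⁻¹' s₂) + μ (F ⁻¹' s₀) :=
      (ENNReal.mul_le_mul_iff_right hvpos.ne' (measure_ne_top μ W)).mp hfin.le
    have h2 : μ (F ⁻¹' s₁) + μ (F ⁻¹' s₂) + μ (F ⁻¹' s₀) ≤ 1 :=
      (ENNReal.mul_le_mul_iff_right hvpos.ne' (measure_ne_top μ W)).mp hfin.ge
    exact le_antisymm h2 h1
  have hsum : μ (F ⁻¹' Ioi 0) + μ (F ⁻¹' Iio 0) + μ (F ⁻¹' {0}) = 1 := by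
    rcases hGhalf with hpos | hneg
    · refine key (Ioi 0) (Ioi 0) (Iio 0) {0} measurableSet_Ioi measurableSet_Ioi
        measurableSet_Iio (measurableSet_singleton 0) hpos ?_
      filter_upwards [hae] with ω h hGv
      simp only [mem_Ioi] at hGv
      rw [← h]
      refine ⟨?_, ?_, ?_⟩
      · simp only [mem_Ioi]
        constructor
        · intro h1; nlinarith
        · intro h1; nlinarith
      · simp only [mem_Iio]
        constructor
        · intro h1; nlinarith
        · intro h1; nlinarith
      · simp only [mem_singleton_iff]
        constructor
        · intro h1
          rcases mul_eq_zero.mp h1 with h2 | h2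
          · exact h2
          · exact absurd h2 hGv.ne'
        · intro h1; rw [h1, zero_mul]
    · have h := key (Iio 0) (Iio 0) (Ioi 0) {0} measurableSet_Iio measurableSet_Iio
        measurableSet_Ioi (measurableSet_singleton 0) hneg ?_
      · rw [← h]; ring
      filter_upwards [hae] with ω h hGv
      simp only [mem_Iio] at hGv
      rw [← h]
      refine ⟨?_, ?_, ?_⟩
      · simp only [mem_Iio]
        constructor
        · intro h1; nlinarith
        · intro h1; nlinarith
      · simp only [mem_Ioi]
        constructor
        · intro h1; nlinarith
        · intro h1; nlinarith
      · simp only [mem_singleton_iff]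
        constructor
        · intro h1
          rcases mul_eq_zero.mp h1 with h2 | h2
          · exact h2
          · exact absurd h2 hGv.ne
        · intro h1; rw [h1, zero_mul]
  refine nullMeasurableSet_of_add_compl_le ?_
  have hPcompl : (F ⁻¹' Ioi 0)ᶜ ⊆ (F ⁻¹' Iio 0) ∪ (F ⁻¹' {0}) := by
    intro ω hω
    rcases lt_trichotomy (F ω) 0 with h | h | h
    · exact Or.inl h
    · exact Or.inr h
    · exact absurd h hω
  calc μ (F ⁻¹' Ioi 0) + μ ((F ⁻¹' Ioi 0)ᶜ)
      ≤ μ (F ⁻¹' Ioi 0) + (μ (F ⁻¹' Iio 0) + μ (F ⁻¹' {0})) := by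
        refine add_le_add_right ((measure_mono hPcompl).trans (measure_union_le _ _)) _
    _ = 1 := by rw [← hsum]; ring

/-- Reconstruct a.e. measurability of a function from that of its absolute value and
null measurability of its sign sets. -/
lemma aemeasurable_of_abs_of_sign {F : Ω → ℝ} (habs : AEMeasurable (fun ω => |F ω|) μ)
    (hP : NullMeasurableSet (F ⁻¹' Ioi 0) μ) (hN : NullMeasurableSet (F ⁻¹' Iio 0) μ) :
    AEMeasurable F μ := by
  classical
  set Fa := habs.mk _ with hFadef
  have hFam : Measurable Fa := habs.measurable_mk
  have hFae : (fun ω => |F ω|) =ᵐ[μ] Fa := habs.ae_eq_mk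
  set Pm := toMeasurable μ (F ⁻¹' Ioi 0) with hPmdef
  set Nm := toMeasurable μ (F ⁻¹' Iio 0) with hNmdef
  have hPmm : MeasurableSet Pm := measurableSet_toMeasurable _ _
  have hNmm : MeasurableSet Nm := measurableSet_toMeasurable _ _
  have hPmae : ∀ᵐ ω ∂μ, (ω ∈ Pm ↔ ω ∈ F ⁻¹' Ioi 0) := by
    rw [← Filter.eventuallyEq_set]
    exact hP.toMeasurable_ae_eq
  have hNmae : ∀ᵐ ω ∂μ, (ω ∈ Nm ↔ ω ∈ F ⁻¹' Iio 0) := by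
    rw [← Filter.eventuallyEq_set]
    exact hN.toMeasurable_ae_eq
  set F' : Ω → ℝ := fun ω => if ω ∈ Pm then Fa ω else if ω ∈ Nm then -Fa ω else 0
    with hF'def
  have hF'm : Measurable F' := by
    refine Measurable.ite hPmm hFam (Measurable.ite hNmm hFam.neg measurable_const)
  refine ⟨F', hF'm, ?_⟩
  filter_upwards [hFae, hPmae, hNmae] with ω h1 h2 h3
  simp only [hF'def]
  by_cases hp : ω ∈ Pm
  · rw [if_pos hp, ← h1]
    have : 0 < F ω := h2.mp hp
    exact (abs_of_pos this).symm
  · rw [if_neg hp]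
    by_cases hn : ω ∈ Nm
    · rw [if_pos hn, ← h1]
      have : F ω < 0 := h3.mp hn
      rw [abs_of_neg this, neg_neg]
    · rw [if_neg hn]
      have hnp : ¬ 0 < F ω := fun hc => hp (h2.mpr hc)
      have hnn : ¬ F ω < 0 := fun hc => hn (h3.mpr hc)
      linarith [not_lt.mp hnp, not_lt.mp hnn]

/-- Main theorem: independent factors of an a.e. strongly measurable, not a.e. zero,
product are a.e. measurable. -/
lemma aemeasurable_both_of_indep_mul {F G : Ω → ℝ} (hind : IndepFun F G μ)
    (hSM : AEStronglyMeasurable (fun ω => F ω * G ω) μ)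
    (hne : ¬ ((fun ω => F ω * G ω) =ᵐ[μ] (fun _ => (0:ℝ)))) :
    AEMeasurable F μ ∧ AEMeasurable G μ := by
  have hAM : AEMeasurable (fun ω => F ω * G ω) μ := hSM.aemeasurable
  set H := hAM.mk _ with hHdef
  have hH : Measurable H := hAM.measurable_mk
  have hae : (fun ω => F ω * G ω) =ᵐ[μ] H := hAM.ae_eq_mk
  have haeswap : (fun ω => G ω * F ω) =ᵐ[μ] H := by
    filter_upwards [hae] with ω h
    rw [← h]; ring
  have hneswap : ¬ ((fun ω => G ω * F ω) =ᵐ[μ] (fun _ => (0:ℝ))) := by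
    intro hcon
    refine hne ?_
    filter_upwards [hcon] with ω h
    rw [mul_comm]; exact h
  -- magnitudes
  have hindabs : IndepFun (fun ω => |F ω|) (fun ω => |G ω|) μ :=
    hind.comp measurable_abs measurable_abs
  have haeabs : (fun ω => |F ω| * |G ω|) =ᵐ[μ] (fun ω => |H ω|) := by
    filter_upwards [hae] with ω h
    rw [← abs_mul, h]
  have hneabs : ¬ ((fun ω => |F ω| * |G ω|) =ᵐ[μ] (fun _ => (0:ℝ))) := by
    intro hcon
    refine hne ?_
    filter_upwards [hcon] with ω h
    rw [← abs_mul] at h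
    exact abs_eq_zero.mp h
  have haeabs' : (fun ω => |G ω| * |F ω|) =ᵐ[μ] (fun ω => |H ω|) := by
    filter_upwards [haeabs] with ω h
    rw [← h]; ring
  have hneabs' : ¬ ((fun ω => |G ω| * |F ω|) =ᵐ[μ] (fun _ => (0:ℝ))) := by
    intro hcon
    refine hneabs ?_
    filter_upwards [hcon] with ω h
    rw [mul_comm]; exact h
  have hone := aemeasurable_one_of_indep_mul hindabs hH.abs haeabs
    (fun ω => abs_nonneg _) (fun ω => abs_nonneg _) hneabs
  have hFabs : AEMeasurable (fun ω => |F ω|) μ ∧ AEMeasurable (fun ω => |G ω|) μ := by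
    rcases hone with h | h
    · exact ⟨h, aemeasurable_other_of_indep_mul hindabs.symm hH.abs haeabs' hneabs' h⟩
    · exact ⟨aemeasurable_other_of_indep_mul hindabs hH.abs haeabs hneabs h, h⟩
  -- signs of F
  have hPF : NullMeasurableSet (F ⁻¹' Ioi 0) μ :=
    nullMeasurableSet_pos_of_indep_mul hind hH hae hne
  have hNF : NullMeasurableSet (F ⁻¹' Iio 0) μ := by
    have hindneg : IndepFun (fun ω => -F ω) G μ := hind.comp measurable_neg measurable_id
    have haeneg : (fun ω => (-F ω) * G ω) =ᵐ[μ] (fun ω => -H ω) := by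
      filter_upwards [hae] with ω h
      simp only [neg_mul]
      rw [h]
    have hneneg : ¬ ((fun ω => (-F ω) * G ω) =ᵐ[μ] (fun _ => (0:ℝ))) := by
      intro hcon
      refine hne ?_
      filter_upwards [hcon] with ω h
      simp only [neg_mul, neg_eq_zero] at h
      exact h
    have h := nullMeasurableSet_pos_of_indep_mul hindneg hH.neg haeneg hneneg
    have heq : (fun ω => -F ω) ⁻¹' Ioi 0 = F ⁻¹' Iio 0 := by
      ext ω
      simp [mem_preimage, mem_Ioi, mem_Iio, neg_pos]
    rwa [heq] at h
  -- signs of G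
  have hPG : NullMeasurableSet (G ⁻¹' Ioi 0) μ :=
    nullMeasurableSet_pos_of_indep_mul hind.symm hH haeswap hneswap
  have hNG : NullMeasurableSet (G ⁻¹' Iio 0) μ := by
    have hindneg : IndepFun (fun ω => -G ω) F μ := hind.symm.comp measurable_neg measurable_id
    have haeneg : (fun ω => (-G ω) * F ω) =ᵐ[μ] (fun ω => -H ω) := by
      filter_upwards [haeswap] with ω h
      simp only [neg_mul]
      rw [h]
    have hneneg : ¬ ((fun ω => (-G ω) * F ω) =ᵐ[μ] (fun _ => (0:ℝ))) := by
      intro hcon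
      refine hneswap ?_
      filter_upwards [hcon] with ω h
      simp only [neg_mul, neg_eq_zero] at h
      exact h
    have h := nullMeasurableSet_pos_of_indep_mul hindneg hH.neg haeneg hneneg
    have heq : (fun ω => -G ω) ⁻¹' Ioi 0 = G ⁻¹' Iio 0 := by
      ext ω
      simp [mem_preimage, mem_Ioi, mem_Iio, neg_pos]
    rwa [heq] at h
  exact ⟨aemeasurable_of_abs_of_sign hFabs.1 hPF hNF,
    aemeasurable_of_abs_of_sign hFabs.2 hPG hNG⟩

/-- The expectation of a product of independent functions vanishes when the first has zero mean,
without any measurability assumptions on the factors. -/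
lemma integral_indep_mul_eq_zero {F G : Ω → ℝ} (hind : IndepFun F G μ)
    (hInt : Integrable (fun ω => F ω * G ω) μ) (hmean : ∫ ω, F ω ∂μ = 0) :
    ∫ ω, F ω * G ω ∂μ = 0 := by
  by_cases h0 : (fun ω => F ω * G ω) =ᵐ[μ] (fun _ => (0:ℝ))
  · rw [integral_congr_ae h0]
    simp
  · obtain ⟨hF, hG⟩ := aemeasurable_both_of_indep_mul hind hInt.1 h0
    have h := hind.integral_fun_mul_eq_mul_integral hF.aestronglyMeasurable hG.aestronglyMeasurable
    rw [h, hmean, zero_mul]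

end AuxIndependenceMeasurability

/-- under the nonlinear outcome model `Y = f(X; β̇) + g(U) + εy`
with `X = ΛU + εx`, `εx ⟂ U`, `εy ⟂ (X, U)` with mean zero, `E εx = 0`,
`E g(U) = 0`, and `BᵀΛ = 0`, the GMM moment condition holds at the truth:
`E[BᵀX · (Y - f(X; β̇))] = 0`, hence `G(β̇) = ‖E[SIV (Y - f(X;β̇))]‖₂² = 0`. -/
theorem nonlinear_gmm_moment_condition {p q : ℕ}
    {Ω : Type*} [MeasurableSpace Ω] (μ : Measure Ω) [IsProbabilityMeasure μ]
    (Λ : Matrix (Fin p) (Fin q) ℝ)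
    (B : Matrix (Fin p) (Fin (p - q)) ℝ) (hBΛ : Bᵀ * Λ = 0)
    (X εx : Ω → Fin p → ℝ) (U : Ω → Fin q → ℝ) (Y εy : Ω → ℝ)
    (f : (Fin p → ℝ) → (Fin p → ℝ) → ℝ) (hf : Measurable fun x => f x)
    (βdot : Fin p → ℝ) (g : (Fin q → ℝ) → ℝ) (hg : Measurable g)
    (hX : ∀ ω, X ω = Λ.mulVec (U ω) + εx ω)
    (hY : ∀ ω, Y ω = f (X ω) βdot + g (U ω) + εy ω)
    (hIndep : IndepFun εx U μ)
    (hIndep2 : IndepFun εy (fun ω => (X ω, U ω)) μ)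
    (hEεx : ∀ i, ∫ ω, εx ω i ∂μ = 0)
    (hEεy : ∫ ω, εy ω ∂μ = 0)
    (hEg : ∫ ω, g (U ω) ∂μ = 0)
    (hInt1 : ∀ i, Integrable (fun ω => εx ω i * g (U ω)) μ)
    (hInt2 : ∀ i, Integrable (fun ω => εx ω i * εy ω) μ)
    (hInt3 : ∀ i, Integrable (fun ω => Bᵀ.mulVec (X ω) i * (Y ω - f (X ω) βdot)) μ) :
    (∀ i, ∫ ω, Bᵀ.mulVec (X ω) i * (Y ω - f (X ω) βdot) ∂μ = 0) ∧
    (∑ i : Fin (p - q),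
      (∫ ω, Bᵀ.mulVec (X ω) i * (Y ω - f (X ω) βdot) ∂μ)^2) = 0 := by
  -- pointwise rewriting of the integrand
  have key : ∀ (i : Fin (p - q)) (ω : Ω), Bᵀ.mulVec (X ω) i * (Y ω - f (X ω) βdot)
      = ∑ j : Fin p, B j i * (εx ω j * g (U ω) + εx ω j * εy ω) := by
    intro i ω
    have h1 : Bᵀ.mulVec (X ω) i = Bᵀ.mulVec (εx ω) i := by
      rw [hX ω, Matrix.mulVec_add, Matrix.mulVec_mulVec, hBΛ, Matrix.zero_mulVec]
      simp
    have h2 : Y ω - f (X ω) βdot = g (U ω) + εy ω := by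
      rw [hY ω]; ring
    rw [h1, h2, Matrix.mulVec, dotProduct, Finset.sum_mul]
    refine Finset.sum_congr rfl fun j _ => ?_
    rw [Matrix.transpose_apply]
    ring
  -- independence of coordinates of εx with g (U)
  have hind1 : ∀ j : Fin p, IndepFun (fun ω => εx ω j) (fun ω => g (U ω)) μ :=
    fun j => hIndep.comp (measurable_pi_apply j) hg
  -- independence of coordinates of εx with εy
  have hind2 : ∀ j : Fin p, IndepFun (fun ω => εx ω j) (fun ω => εy ω) μ := by
    intro j
    have hφ : Measurable (fun w : (Fin p → ℝ) × (Fin q → ℝ) => w.1 j - Λ.mulVec w.2 j) := by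
      have hm1 : Measurable (fun w : (Fin p → ℝ) × (Fin q → ℝ) => w.1 j) :=
        (measurable_pi_apply j).comp measurable_fst
      have hm2 : Measurable (fun w : (Fin p → ℝ) × (Fin q → ℝ) => Λ.mulVec w.2 j) := by
        have : (fun w : (Fin p → ℝ) × (Fin q → ℝ) => Λ.mulVec w.2 j)
            = fun w => ∑ k : Fin q, Λ j k * w.2 k := by
          funext w
          rw [Matrix.mulVec, dotProduct]
        rw [this]
        exact Finset.measurable_sum _ fun k _ =>
          measurable_const.mul ((measurable_pi_apply k).comp measurable_snd)
      exact hm1.sub hm2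
    have h := hIndep2.comp measurable_id hφ
    have heq : ((fun w : (Fin p → ℝ) × (Fin q → ℝ) => w.1 j - Λ.mulVec w.2 j)
        ∘ (fun ω => (X ω, U ω))) = fun ω => εx ω j := by
      funext ω
      simp only [Function.comp_apply]
      rw [hX ω]
      simp [Matrix.mulVec_add]
    rw [heq] at h
    exact h.symm
  have hzero : ∀ i : Fin (p - q), ∫ ω, Bᵀ.mulVec (X ω) i * (Y ω - f (X ω) βdot) ∂μ = 0 := by
    intro i
    have hcong : ∫ ω, Bᵀ.mulVec (X ω) i * (Y ω - f (X ω) βdot) ∂μ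
        = ∫ ω, ∑ j : Fin p, B j i * (εx ω j * g (U ω) + εx ω j * εy ω) ∂μ :=
      integral_congr_ae (Filter.Eventually.of_forall fun ω => key i ω)
    have hsum := integral_finset_sum (μ := μ) Finset.univ
      (f := fun (j : Fin p) (ω : Ω) => B j i * (εx ω j * g (U ω) + εx ω j * εy ω))
      (fun j _ => by
        have : (fun ω => B j i * (εx ω j * g (U ω) + εx ω j * εy ω))
            = fun ω => B j i * ((fun ω => εx ω j * g (U ω)) ω + (fun ω => εx ω j * εy ω) ω) := rfl
        exact ((hInt1 j).add (hInt2 j)).const_mul (B j i))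
    rw [hcong, hsum]
    refine Finset.sum_eq_zero fun j _ => ?_
    show ∫ a, B j i * (εx a j * g (U a) + εx a j * εy a) ∂μ = 0
    rw [integral_const_mul]
    rw [show (fun a => εx a j * g (U a) + εx a j * εy a)
        = fun a => (fun ω => εx ω j * g (U ω)) a + (fun ω => εx ω j * εy ω) a from rfl]
    rw [integral_add (hInt1 j) (hInt2 j)]
    rw [integral_indep_mul_eq_zero (hind1 j) (hInt1 j) (hEεx j),
      integral_indep_mul_eq_zero (hind2 j) (hInt2 j) (hEεx j)]
    ring
  refine ⟨hzero, ?_⟩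
  refine Finset.sum_eq_zero fun i _ => ?_
  rw [hzero i]
  ring
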